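/- Let l ≥ 3 and r ≥ 2 be integers and let H be a hypergraph all of whose edges have size between 2 and r. Suppose H contains rl distinct edges e_1, …, e_{rl}, each strictly containing a set C with |C| ≥ 2, such that e_i ∩ e_j = C for all i ≠ j. Let H' be the hypergraph on V(H) obtained from H by deleting every edge that contains C and adding C as an edge. Then α(H) ≥ α(H'), and if H' contains a loose cycle of length l then so does H. -/
import Mathlib


open Finset

section Defs

variable {α : Type*} [DecidableEq α]

/-- `e 0, …, e (l-1)` form a loose cycle of length `l`: distinct edges, each of size
at least 2, cyclically consecutive edges meet in exactly one vertex, all other pairs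
of edges are disjoint. -/
def IsLooseCycleOn (l : ℕ) (e : ℕ → Finset α) : Prop :=
  (∀ i < l, ∀ j < l, i ≠ j → e i ≠ e j) ∧
  (∀ i < l, 2 ≤ (e i).card) ∧
  (∀ i < l, (e i ∩ e ((i + 1) % l)).card = 1) ∧
  (∀ i < l, ∀ j < l, j ≠ i → j ≠ (i + 1) % l → i ≠ (j + 1) % l → e i ∩ e j = ∅)

/-- A hypergraph with edge set `E` contains a loose cycle of length `l`. -/
def ContainsLooseCycle (l : ℕ) (E : Set (Finset α)) : Prop :=
  ∃ e : ℕ → Finset α, IsLooseCycleOn l e ∧ ∀ i < l, e i ∈ E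

/-- A hypergraph with edge set `E` contains an `r`-uniform loose cycle of length `l`. -/
def ContainsUniformLooseCycle (r l : ℕ) (E : Set (Finset α)) : Prop :=
  ∃ e : ℕ → Finset α, IsLooseCycleOn l e ∧ (∀ i < l, (e i).card = r) ∧ ∀ i < l, e i ∈ E

/-- `f 0, …, f (k-1)` form a simple path of length `k`: each edge has size at least 2,
consecutive edges meet, non-consecutive edges are disjoint, and any two distinct
edges meet in at most one vertex. -/
def IsSimplePathOn (k : ℕ) (f : ℕ → Finset α) : Prop :=
  (∀ i < k, 2 ≤ (f i).card) ∧
  (∀ i, i + 1 < k → (f i ∩ f (i + 1)).Nonempty) ∧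
  (∀ i < k, ∀ j < k, i < j → j ≠ i + 1 → f i ∩ f j = ∅) ∧
  (∀ i < k, ∀ j < k, i ≠ j → (f i ∩ f j).card ≤ 1)

/-- The simple path `f 0, …, f (k-1)` joins `a` to `b`. -/
def SimplePathJoins (k : ℕ) (f : ℕ → Finset α) (a b : α) : Prop :=
  IsSimplePathOn k f ∧ a ∈ f 0 ∧ b ∈ f (k - 1) ∧
  (2 ≤ k → a ∉ f 1 ∧ b ∉ f (k - 2))

/-- `p` is a heavy pair of the 3-graph `H` (with respect to the parameter `l`):
it is a pair of vertices contained in at least `2l-2` edges of `H`. -/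
def PairHeavy (l : ℕ) (H : Finset (Finset α)) (p : Finset α) : Prop :=
  p.card = 2 ∧ 2 * l - 2 ≤ (H.filter fun e => p ⊆ e).card

/-- `e` is a light edge of the 3-graph `H`: an edge of `H` containing no heavy pair. -/
def EdgeLight (l : ℕ) (H : Finset (Finset α)) (e : Finset α) : Prop :=
  e ∈ H ∧ ∀ p ⊆ e, ¬ PairHeavy l H p

/-- The reduced hypergraph `H*` of a 3-graph `H`: its edges are the light edges of `H`
together with the heavy pairs of `H`. -/
def Reduced (l : ℕ) (H : Finset (Finset α)) : Set (Finset α) :=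
  {e | EdgeLight l H e ∨ PairHeavy l H e}

/-- `(X, Y)` is an extender in the 3-graph `H`. -/
def IsExtender (l : ℕ) (H : Finset (Finset α)) (X Y : Finset α) : Prop :=
  Disjoint X Y ∧ Y.card ≤ 2 * X.card ∧
  ∀ u ∈ X, ∀ v ∈ X, u ≠ v → ∀ S : Finset α,
    Disjoint S ({u, v} ∪ Y) → S.card ≤ 2 * l - 5 →
      ∃ f : ℕ → Finset α, SimplePathJoins 2 f u v ∧ (∀ i < 2, f i ∈ H) ∧
        ∀ i < 2, Disjoint (f i) S

/-- `X` is an independent set of the hypergraph with edge set `E`. -/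
def IndepIn (E : Set (Finset α)) (X : Finset α) : Prop := ∀ e ∈ E, ¬ e ⊆ X

end Defs

/-- The independence number of a hypergraph on a finite vertex type. -/
noncomputable def hyperAlpha {α : Type*} [DecidableEq α] [Fintype α]
    (H : Finset (Finset α)) : ℕ :=
  sSup {k | ∃ X : Finset α, IndepIn (↑H : Set (Finset α)) X ∧ X.card = k}

/-- Sunflower replacement: if a `[2,r]`-graph `H` contains `r*l` edges forming a
sunflower with core `C`, `|C| ≥ 2`, each petal strictly containing `C`, then
replacing all edges containing `C` by the single edge `C` does not increase the
independence number and does not remove loose cycles of length `l`. -/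
theorem sunflower_replacement {α : Type*} [DecidableEq α] [Fintype α] (l r : ℕ)
    (hl : 3 ≤ l) (hr : 2 ≤ r)
    (H : Finset (Finset α)) (hH : ∀ e ∈ H, 2 ≤ e.card ∧ e.card ≤ r)
    (C : Finset α) (hC : 2 ≤ C.card)
    (e : ℕ → Finset α)
    (hdist : ∀ i < r * l, ∀ j < r * l, i ≠ j → e i ≠ e j)
    (hmem : ∀ i < r * l, e i ∈ H)
    (hcore : ∀ i < r * l, C ⊆ e i ∧ C ≠ e i)
    (hinter : ∀ i < r * l, ∀ j < r * l, i ≠ j → e i ∩ e j = C) :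
    hyperAlpha ((H.filter fun f => ¬ C ⊆ f) ∪ {C}) ≤ hyperAlpha H ∧
      (ContainsLooseCycle l (↑((H.filter fun f => ¬ C ⊆ f) ∪ {C}) : Set (Finset α)) →
        ContainsLooseCycle l (↑H : Set (Finset α))) := by
  have hmemH' : ∀ g : Finset α,
      g ∈ (↑((H.filter fun f => ¬ C ⊆ f) ∪ {C}) : Set (Finset α)) ↔
        (g ∈ H ∧ ¬ C ⊆ g) ∨ g = C := by
    intro g
    simp [Finset.mem_union, Finset.mem_filter]
    tauto
  constructor
  · apply csSup_le_csSup
    · exact ⟨Fintype.card α, fun k hk => by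
        obtain ⟨X, _, hX⟩ := hk; exact hX ▸ X.card_le_univ⟩
    · refine ⟨0, ∅, ?_, rfl⟩
      intro g hg hsub
      have hgne : g.Nonempty := by
        rcases (hmemH' g).mp hg with ⟨hgH, _⟩ | rfl
        · exact Finset.card_pos.mp (lt_of_lt_of_le two_pos (hH g hgH).1)
        · exact Finset.card_pos.mp (lt_of_lt_of_le two_pos hC)
      exact hgne.ne_empty (Finset.subset_empty.mp hsub)
    · rintro k ⟨X, hX, rfl⟩
      refine ⟨X, ?_, rfl⟩
      intro g hg hsub
      by_cases hCg : C ⊆ g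
      · exact hX C ((hmemH' C).mpr (Or.inr rfl)) (hCg.trans hsub)
      · exact hX g ((hmemH' g).mpr (Or.inl ⟨hg, hCg⟩)) hsub
  · rintro ⟨f, hcyc, hmemf⟩
    by_cases hex : ∃ i < l, f i = C
    · obtain ⟨i, hi, hfi⟩ := hex
      have hfH : ∀ j, j < l → j ≠ i → f j ∈ H := by
        intro j hj hji
        rcases (hmemH' (f j)).mp (hmemf j hj) with ⟨h1, _⟩ | h2
        · exact h1
        · exact absurd (h2.trans hfi.symm) (hcyc.1 j hj i hi hji)
      set T := ((Finset.range l).erase i).biUnion f with hT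
      have hTcard : T.card ≤ (l - 1) * r := by
        calc T.card ≤ ∑ j ∈ (Finset.range l).erase i, (f j).card :=
              Finset.card_biUnion_le
          _ ≤ ∑ _j ∈ (Finset.range l).erase i, r := by
              apply Finset.sum_le_sum
              intro j hj
              obtain ⟨hji, hjr⟩ := Finset.mem_erase.mp hj
              exact (hH _ (hfH j (Finset.mem_range.mp hjr) hji)).2
          _ = (l - 1) * r := by
              rw [Finset.sum_const, smul_eq_mul,
                Finset.card_erase_of_mem (Finset.mem_range.mpr hi),
                Finset.card_range]
      have hpetal : ∃ k < r * l, Disjoint (e k \ C) T := by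
        by_contra hcon
        push_neg at hcon
        obtain ⟨x0, _⟩ := Finset.card_pos.mp (lt_of_lt_of_le two_pos hC)
        classical
        set w : ℕ → α := fun k =>
          if h : ((e k \ C) ∩ T).Nonempty then h.choose else x0 with hw
        have hwmem : ∀ k < r * l, w k ∈ (e k \ C) ∩ T := by
          intro k hk
          have hne : ((e k \ C) ∩ T).Nonempty := by
            have hc := hcon k hk
            rw [Finset.not_disjoint_iff] at hc
            obtain ⟨x, hx1, hx2⟩ := hc
            exact ⟨x, Finset.mem_inter.mpr ⟨hx1, hx2⟩⟩
          rw [hw]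
          simp only [hne, dif_pos]
          exact hne.choose_spec
        have hle : (Finset.range (r * l)).card ≤ T.card := by
          apply Finset.card_le_card_of_injOn w
          · intro k hk
            exact (Finset.mem_inter.mp (hwmem k (Finset.mem_range.mp hk))).2
          · intro k1 hk1 k2 hk2 heq
            by_contra hne12
            have h1 := Finset.mem_inter.mp (hwmem k1 (Finset.mem_range.mp hk1))
            have h2 := Finset.mem_inter.mp (hwmem k2 (Finset.mem_range.mp hk2))
            have hx1 := Finset.mem_sdiff.mp h1.1
            have hx2 := Finset.mem_sdiff.mp h2.1
            have : w k1 ∈ e k1 ∩ e k2 := by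
              refine Finset.mem_inter.mpr ⟨hx1.1, ?_⟩
              rw [heq]; exact hx2.1
            rw [hinter k1 (Finset.mem_range.mp hk1) k2 (Finset.mem_range.mp hk2)
              hne12] at this
            exact hx1.2 this
        rw [Finset.card_range] at hle
        have hfin : r * l ≤ (l - 1) * r := le_trans hle hTcard
        have hlt : (l - 1) * r < l * r :=
          Nat.mul_lt_mul_of_lt_of_le (by omega) le_rfl (by omega)
        rw [mul_comm r l] at hfin
        exact absurd (lt_of_le_of_lt hfin hlt) (lt_irrefl _)
      obtain ⟨k, hk, hdisj⟩ := hpetal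
      have hekC : C ⊆ e k := (hcore k hk).1
      have key : ∀ j, j < l → j ≠ i → e k ∩ f j = f i ∩ f j := by
        intro j hj hji
        rw [hfi]
        ext x
        simp only [Finset.mem_inter]
        constructor
        · rintro ⟨hx1, hx2⟩
          refine ⟨?_, hx2⟩
          by_contra hxC
          have hxT : x ∈ T := Finset.mem_biUnion.mpr
            ⟨j, Finset.mem_erase.mpr ⟨hji, Finset.mem_range.mpr hj⟩, hx2⟩
          exact (Finset.disjoint_left.mp hdisj
            (Finset.mem_sdiff.mpr ⟨hx1, hxC⟩)) hxT
        · rintro ⟨hx1, hx2⟩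
          exact ⟨hekC hx1, hx2⟩
      have henef : ∀ j, j < l → j ≠ i → e k ≠ f j := by
        intro j hj hji heq
        have h1 : e k ∩ f j = e k := by rw [heq, Finset.inter_self]
        have h2 := key j hj hji
        rw [h1, hfi] at h2
        have hsub : e k ⊆ C := h2 ▸ Finset.inter_subset_left
        exact (hcore k hk).2 (Finset.Subset.antisymm hekC hsub)
      have hne_succ : ∀ a, a < l → (a + 1) % l ≠ a := by
        intro a ha h
        rcases Nat.lt_or_ge (a + 1) l with h' | h'
        · rw [Nat.mod_eq_of_lt h'] at h; omega
        · have ha1 : a + 1 = l := by omega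
          rw [ha1, Nat.mod_self] at h; omega
      set g : ℕ → Finset α := fun j => if j = i then e k else f j with hg
      have hgi : g i = e k := by simp [hg]
      have hgj : ∀ j, j ≠ i → g j = f j := fun j hj => by simp [hg, hj]
      refine ⟨g, ⟨?_, ?_, ?_, ?_⟩, ?_⟩
      · intro a ha b hb hab
        by_cases hai : a = i
        · subst hai
          rw [hgi, hgj b (Ne.symm hab)]
          exact henef b hb (Ne.symm hab)
        · by_cases hbi : b = i
          · subst hbi
            rw [hgj a hai, hgi]
            exact (henef a ha hai).symm
          · rw [hgj a hai, hgj b hbi]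
            exact hcyc.1 a ha b hb hab
      · intro a ha
        by_cases hai : a = i
        · subst hai; rw [hgi]
          exact le_trans hC (Finset.card_le_card hekC)
        · rw [hgj a hai]; exact hcyc.2.1 a ha
      · intro a ha
        have hb : (a + 1) % l < l := Nat.mod_lt _ (by omega)
        have hba : (a + 1) % l ≠ a := hne_succ a ha
        by_cases hai : a = i
        · subst hai
          rw [hgi, hgj _ hba, key _ hb hba]
          exact hcyc.2.2.1 a ha
        · by_cases hbi : (a + 1) % l = i
          · rw [hgj a hai, hbi, hgi, Finset.inter_comm, key a ha hai,
              Finset.inter_comm, ← hbi]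
            exact hcyc.2.2.1 a ha
          · rw [hgj a hai, hgj _ hbi]
            exact hcyc.2.2.1 a ha
      · intro a ha b hb hba hb1 ha1
        by_cases hai : a = i
        · subst hai
          rw [hgi, hgj b hba, key b hb hba]
          exact hcyc.2.2.2 a ha b hb hba hb1 ha1
        · by_cases hbi : b = i
          · subst hbi
            rw [hgj a hai, hgi, Finset.inter_comm, key a ha hai,
              Finset.inter_comm]
            exact hcyc.2.2.2 a ha b hb hba hb1 ha1
          · rw [hgj a hai, hgj b hbi]
            exact hcyc.2.2.2 a ha b hb hba hb1 ha1
      · intro a ha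
        by_cases hai : a = i
        · subst hai; rw [hgi]; exact hmem k hk
        · rw [hgj a hai]
          exact hfH a ha hai
    · push_neg at hex
      refine ⟨f, hcyc, fun j hj => ?_⟩
      rcases (hmemH' (f j)).mp (hmemf j hj) with ⟨h1, _⟩ | h2
      · exact h1
      · exact absurd h2 (hex j hj)
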